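/- Let d ∈ ℕ, L ∈ ℝ, T > 0, g ∈ C¹(ℝ^d, ℝ^d), and let θ^ϑ : [0,T] → ℝ^d be continuous solutions of θ_t^x = x + ∫_0^t g(θ_s^x) ds satisfying ‖θ_t^x − θ_t^y‖ ≤ ‖x − y‖·exp(L·t) for all x, y, t. Then ⟨g(x) − g(y), x − y⟩ ≤ L‖x − y‖² for all x, y ∈ ℝ^d. -/

import Mathlib

open MeasureTheory intervalIntegral
open scoped RealInnerProductSpace

/-- Converse of the flow contraction estimate: if the flow of a `C¹` vector field `g`
satisfies `‖θ_t^x − θ_t^y‖ ≤ ‖x − y‖ exp(Lt)` on `[0,T]`, then `g` satisfies the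
one-sided Lipschitz condition with constant `L`. -/
theorem stmt_13 (d : ℕ) (L T : ℝ) (hT : 0 < T)
    (g : EuclideanSpace ℝ (Fin d) → EuclideanSpace ℝ (Fin d)) (hg : ContDiff ℝ 1 g)
    (θ : EuclideanSpace ℝ (Fin d) → ℝ → EuclideanSpace ℝ (Fin d))
    (hθc : ∀ ϑ, ContinuousOn (θ ϑ) (Set.Icc 0 T))
    (hθ : ∀ ϑ, ∀ t ∈ Set.Icc (0:ℝ) T, θ ϑ t = ϑ + ∫ s in (0:ℝ)..t, g (θ ϑ s))
    (hcontract : ∀ x y, ∀ t ∈ Set.Icc (0:ℝ) T,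
      ‖θ x t - θ y t‖ ≤ ‖x - y‖ * Real.exp (L * t)) :
    ∀ x y, ⟪g x - g y, x - y⟫ ≤ L * ‖x - y‖ ^ 2 := by
  intro x y
  have hT0 : (0:ℝ) ∈ Set.Icc (0:ℝ) T := ⟨le_rfl, hT.le⟩
  have hθ0 : ∀ ϑ, θ ϑ 0 = ϑ := fun ϑ => by simpa using hθ ϑ 0 hT0
  -- derivative of the flow at time 0
  have key : ∀ ϑ, HasDerivWithinAt (θ ϑ) (g ϑ) (Set.Icc 0 T) 0 := by
    intro ϑ
    have hcont : ContinuousOn (fun s => g (θ ϑ s)) (Set.Icc 0 T) :=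
      hg.continuous.comp_continuousOn (hθc ϑ)
    have hmeas : StronglyMeasurableAtFilter (fun s => g (θ ϑ s)) (nhdsWithin 0 (Set.Ioi 0)) :=
      ⟨Set.Ioo 0 T, Ioo_mem_nhdsGT hT,
        (hcont.mono fun z hz => ⟨hz.1.le, hz.2.le⟩).aestronglyMeasurable measurableSet_Ioo⟩
    have hcw : ContinuousWithinAt (fun s => g (θ ϑ s)) (Set.Ioi 0) 0 := by
      have h1 : ContinuousWithinAt (fun s => g (θ ϑ s)) (Set.Ioc 0 T) 0 :=
        (hcont 0 hT0).mono Set.Ioc_subset_Icc_self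
      rwa [ContinuousWithinAt, nhdsWithin_Ioc_eq_nhdsGT hT] at h1
    have hF : HasDerivWithinAt (fun u => ∫ s in (0:ℝ)..u, g (θ ϑ s)) (g (θ ϑ 0))
        (Set.Ici 0) 0 :=
      intervalIntegral.integral_hasDerivWithinAt_right (IntervalIntegrable.refl) hmeas hcw
    have hF' : HasDerivWithinAt (fun u => ϑ + ∫ s in (0:ℝ)..u, g (θ ϑ s)) (g (θ ϑ 0))
        (Set.Icc 0 T) 0 := (hF.const_add ϑ).mono (Set.Icc_subset_Ici_self)
    rw [hθ0 ϑ] at hF'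
    exact hF'.congr (fun t ht => hθ ϑ t ht) (hθ ϑ 0 hT0)
  -- derivative of the squared distance
  have h1 := (key x).sub (key y)
  have hd : HasDerivWithinAt (fun t => ⟪θ x t - θ y t, θ x t - θ y t⟫)
      (2 * ⟪g x - g y, x - y⟫) (Set.Icc 0 T) 0 := by
    have := h1.inner ℝ h1
    simp only [Pi.sub_apply, hθ0] at this
    rw [real_inner_comm (g x - g y) (x - y), ← two_mul] at this
    exact this
  -- derivative of the bound
  have hdexp : HasDerivWithinAt (fun t : ℝ => ‖x - y‖ ^ 2 * Real.exp (2 * L * t))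
      (‖x - y‖ ^ 2 * (2 * L)) (Set.Icc 0 T) 0 := by
    have h2 : HasDerivAt (fun t : ℝ => Real.exp (2 * L * t)) (2 * L) 0 := by
      have h3 : HasDerivAt (fun t : ℝ => 2 * L * t) (2 * L) 0 := by
        simpa using (hasDerivAt_id (0:ℝ)).const_mul (2 * L)
      simpa using h3.exp
    exact ((h2.const_mul (‖x - y‖ ^ 2)).hasDerivWithinAt)
  -- slope inequality
  have hslope : ∀ᶠ t in nhdsWithin 0 (Set.Icc 0 T \ {0}),
      slope (fun t => ⟪θ x t - θ y t, θ x t - θ y t⟫) 0 t ≤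
      slope (fun t : ℝ => ‖x - y‖ ^ 2 * Real.exp (2 * L * t)) 0 t := by
    filter_upwards [self_mem_nhdsWithin] with t ht
    obtain ⟨htIcc, ht0⟩ := ht
    have htpos : 0 < t := lt_of_le_of_ne htIcc.1 (Ne.symm ht0)
    have hle : ⟪θ x t - θ y t, θ x t - θ y t⟫ ≤ ‖x - y‖ ^ 2 * Real.exp (2 * L * t) := by
      have h4 := hcontract x y t htIcc
      have h5 : ‖θ x t - θ y t‖ ^ 2 ≤ (‖x - y‖ * Real.exp (L * t)) ^ 2 :=
        pow_le_pow_left₀ (norm_nonneg _) h4 2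
      rw [real_inner_self_eq_norm_sq]
      calc ‖θ x t - θ y t‖ ^ 2 ≤ (‖x - y‖ * Real.exp (L * t)) ^ 2 := h5
        _ = ‖x - y‖ ^ 2 * Real.exp (2 * L * t) := by
            rw [mul_pow, ← Real.exp_nat_mul]; ring_nf
    have hzero : ⟪θ x 0 - θ y 0, θ x 0 - θ y 0⟫ =
        ‖x - y‖ ^ 2 * Real.exp (2 * L * 0) := by
      simp only [hθ0]
      rw [real_inner_self_eq_norm_sq]
      simp
    rw [slope_def_field, slope_def_field, hzero]
    gcongr
  -- pass to the limit
  have hlim1 := hasDerivWithinAt_iff_tendsto_slope.mp hd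
  have hlim2 := hasDerivWithinAt_iff_tendsto_slope.mp hdexp
  have hne : (nhdsWithin (0:ℝ) (Set.Icc 0 T \ {0})).NeBot := by
    haveI : (nhdsWithin (0:ℝ) (Set.Ioc 0 T)).NeBot := by
      rw [nhdsWithin_Ioc_eq_nhdsGT hT]; infer_instance
    refine Filter.neBot_of_le (f := nhdsWithin (0:ℝ) (Set.Ioc 0 T))
      (nhdsWithin_mono 0 fun z hz => ⟨⟨hz.1.le, hz.2⟩, hz.1.ne'⟩)
  have hfin : 2 * ⟪g x - g y, x - y⟫ ≤ ‖x - y‖ ^ 2 * (2 * L) :=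
    le_of_tendsto_of_tendsto hlim1 hlim2 hslope
  linarith
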